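/- Let n be a positive integer and let s be a complex number such that s + j ≠ 0 for j = 1, …, n. Then ∑_{k=1}^{n} ((-1)^{k-1}/k) · C(s+n, k) · (∑_{j=0}^{k-1} 1/(s+n-j)) = ∑_{k=0}^{n-1} (-1)^k · C(s+k, k) / ((k+1)^2 · binom(n, k+1)) + s · ∑_{k=0}^{n-1} ( (-1)^k · C(s+k, k) / ((k+1)^2 · binom(n, k+1)) ) · ∑_{j=1}^{k} 1/(s+j), where binom(n, k+1) is the ordinary binomial coefficient. -/

import Mathlib

/-- Generalized binomial coefficient `C(s,k) = s(s-1)⋯(s-k+1)/k!` for complex `s`. -/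
noncomputable def genChoose (s : ℂ) (k : ℕ) : ℂ :=
  (∏ i ∈ Finset.range k, (s - i)) / (Nat.factorial k)

/-- The `n`-th harmonic number as a complex number. -/
noncomputable def Hc (n : ℕ) : ℂ := ∑ i ∈ Finset.range n, 1 / (i + 1)

/-- The `n`-th generalized harmonic number of order 2 as a complex number. -/
noncomputable def H2c (n : ℕ) : ℂ := ∑ i ∈ Finset.range n, 1 / ((i : ℂ) + 1) ^ 2


lemma kc_ne (k : ℕ) : ((k : ℂ) + 1) ≠ 0 := by
  have := Nat.cast_add_one_ne_zero (R := ℂ) k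
  simpa using this

lemma fac_ne (k : ℕ) : ((Nat.factorial k : ℕ) : ℂ) ≠ 0 := by
  exact_mod_cast Nat.cast_ne_zero.mpr (Nat.factorial_ne_zero k)

lemma choose_ne {m j : ℕ} (h : j ≤ m) : ((Nat.choose m j : ℕ) : ℂ) ≠ 0 :=
  Nat.cast_ne_zero.mpr (Nat.choose_pos h).ne'

lemma genChoose_zero (x : ℂ) : genChoose x 0 = 1 := by simp [genChoose]

lemma genChoose_succ (x : ℂ) (k : ℕ) :
    genChoose x (k + 1) = genChoose x k * (x - k) / (k + 1) := by
  simp only [genChoose, Finset.prod_range_succ, Nat.factorial_succ]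
  push_cast
  rw [div_mul_eq_mul_div, div_div, mul_comm ((Nat.factorial k : ℂ)) ((k:ℂ)+1)]

lemma genChoose_shift (x : ℂ) (k : ℕ) :
    genChoose (x + 1) (k + 1) = (x + 1) * genChoose x k / (k + 1) := by
  simp only [genChoose, Nat.factorial_succ]
  rw [Finset.prod_range_succ']
  push_cast
  have : ∀ i ∈ Finset.range k, x + 1 - ((i : ℂ) + 1) = x - i := by intros; ring
  rw [Finset.prod_congr rfl this]
  field_simp [kc_ne k, fac_ne k]
  ring

lemma genChoose_shift' (x : ℂ) (k : ℕ) :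
    ((k : ℂ) + 1) * genChoose (x + 1) (k + 1) = (x + 1) * genChoose x k := by
  rw [genChoose_shift]
  field_simp [kc_ne k]

lemma genChoose_pascal (x : ℂ) (k : ℕ) :
    genChoose (x + 1) (k + 1) = genChoose x (k + 1) + genChoose x k := by
  rw [genChoose_shift, genChoose_succ]
  field_simp [kc_ne k]
  ring

lemma alt_sum (y : ℂ) (m : ℕ) :
    ∑ i ∈ Finset.range (m + 1), (-1 : ℂ) ^ i * genChoose y i
      = (-1) ^ m * genChoose (y - 1) m := by
  induction m with
  | zero => simp [genChoose_zero]
  | succ m ih =>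
      rw [Finset.sum_range_succ, ih]
      have hp := genChoose_pascal (y - 1) m
      rw [sub_add_cancel] at hp
      rw [hp]
      ring

lemma Wlem (m : ℕ) (s : ℂ) : ∀ r, r ≤ m →
    (s + m + 2) * ∑ j ∈ Finset.range (r + 1),
        (-1 : ℂ) ^ j * genChoose (s + j) j * (Nat.factorial j) * (Nat.factorial (m - j))
      = (Nat.factorial (m + 1))
        + (-1) ^ r * genChoose (s + r + 1) (r + 1) * (Nat.factorial (r + 1)) * (Nat.factorial (m - r)) := by
  intro r
  induction r with
  | zero =>
      intro _
      have h1 : genChoose (s + 1) 1 = s + 1 := by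
        rw [show (1 : ℕ) = 0 + 1 from rfl, genChoose_succ]
        simp [genChoose_zero]
      simp only [zero_add, Finset.sum_range_one, Nat.cast_zero, add_zero, pow_zero, one_mul,
        Nat.sub_zero, Nat.factorial_one, Nat.factorial_zero, Nat.cast_one, genChoose_zero]
      rw [h1]
      have hfs : ((Nat.factorial (m + 1) : ℕ) : ℂ) = ((m : ℂ) + 1) * (Nat.factorial m : ℕ) := by
        rw [Nat.factorial_succ]; push_cast; ring
      rw [hfs]
      ring
  | succ r ih =>
      intro hr
      have hrm : r ≤ m := le_of_lt (Nat.lt_of_succ_le hr)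
      rw [Finset.sum_range_succ, mul_add, ih hrm]
      -- facts
      have hmr1 : m - r = (m - (r + 1)) + 1 := by omega
      have hfmr : ((Nat.factorial (m - r) : ℕ) : ℂ)
          = ((m : ℂ) - r) * (Nat.factorial (m - (r + 1)) : ℕ) := by
        rw [hmr1, Nat.factorial_succ]
        push_cast [Nat.cast_sub hr]
        ring
      have hfr : ((Nat.factorial (r + 2) : ℕ) : ℂ) = ((r : ℂ) + 2) * (Nat.factorial (r + 1) : ℕ) := by
        rw [show r + 2 = (r + 1) + 1 from rfl, Nat.factorial_succ]; push_cast; ring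
      have hsh := genChoose_shift' (s + (r : ℂ) + 1) (r + 1)
      push_cast at hsh ⊢
      simp only [add_assoc] at hsh ⊢
      rw [show r + (1 + 1) = r + 2 from rfl] at hsh ⊢
      rw [hfmr, hfr]
      linear_combination ((-1) ^ r * ((Nat.factorial (r + 1) : ℕ) : ℂ) * ((Nat.factorial (m - (r + 1)) : ℕ) : ℂ)) * hsh

noncomputable def Ff (n : ℕ) (s : ℂ) : ℂ :=
  ∑ k ∈ Finset.Icc 1 n, (-1 : ℂ) ^ (k - 1) / k * genChoose (s + n) k

noncomputable def Gg (n : ℕ) (s : ℂ) : ℂ :=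
  ∑ k ∈ Finset.range n, (-1 : ℂ) ^ k * (s * genChoose (s + k) k) /
      (((k : ℂ) + 1) ^ 2 * (Nat.choose n (k + 1) : ℂ))

lemma sum_Icc_one {M : Type*} [AddCommMonoid M] (n : ℕ) (f : ℕ → M) :
    ∑ k ∈ Finset.Icc 1 n, f k = ∑ j ∈ Finset.range n, f (j + 1) := by
  rw [← Finset.Ico_add_one_right_eq_Icc, Finset.sum_Ico_eq_sum_range]
  exact Finset.sum_congr (by norm_num) fun i _ => by rw [add_comm]

lemma hAval (n : ℕ) (s : ℂ) :
    ∑ j ∈ Finset.range (n + 1), (-1 : ℂ) ^ j * genChoose (s + n + 1) (j + 1)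
      = 1 + (-1) ^ n * genChoose (s + n) (n + 1) := by
  have h := alt_sum (s + n + 1) (n + 1)
  rw [show s + (n : ℂ) + 1 - 1 = s + n by ring] at h
  rw [Finset.sum_range_succ'] at h
  simp only [pow_zero, one_mul, genChoose_zero] at h
  have h2 : ∑ j ∈ Finset.range (n + 1), (-1 : ℂ) ^ (j + 1) * genChoose (s + n + 1) (j + 1)
      = -∑ j ∈ Finset.range (n + 1), (-1 : ℂ) ^ j * genChoose (s + n + 1) (j + 1) := by
    rw [← Finset.sum_neg_distrib]
    exact Finset.sum_congr rfl fun j _ => by ring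
  rw [h2] at h
  linear_combination -h

lemma hA (n : ℕ) (s : ℂ) (hsn : s + (n : ℂ) + 1 ≠ 0) :
    Ff (n + 1) s = Ff n s + (-1) ^ n / ((n : ℂ) + 1) * genChoose (s + n) (n + 1)
      + (1 + (-1) ^ n * genChoose (s + n) (n + 1)) / (s + n + 1) := by
  have hFf1 : Ff (n + 1) s
      = ∑ j ∈ Finset.range (n + 1), (-1 : ℂ) ^ j / ((j : ℂ) + 1) * genChoose (s + n + 1) (j + 1) := by
    rw [Ff, sum_Icc_one]
    refine Finset.sum_congr rfl fun j _ => ?_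
    have e1 : (j + 1) - 1 = j := by omega
    have e2 : ((j + 1 : ℕ) : ℂ) = (j : ℂ) + 1 := by push_cast; ring
    have e3 : s + ((n + 1 : ℕ) : ℂ) = s + n + 1 := by push_cast; ring
    rw [e1, e2, e3]
  have split : ∀ j ∈ Finset.range (n + 1),
      (-1 : ℂ) ^ j / ((j : ℂ) + 1) * genChoose (s + n + 1) (j + 1)
        = (-1 : ℂ) ^ j / ((j : ℂ) + 1) * genChoose (s + n) (j + 1)
          + ((-1 : ℂ) ^ j * genChoose (s + n + 1) (j + 1)) / (s + n + 1) := by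
    intro j _
    have hp : genChoose (s + n + 1) (j + 1) = genChoose (s + n) (j + 1) + genChoose (s + n) j := by
      have := genChoose_pascal (s + n) j
      rw [← this]
    have hq : ((j : ℂ) + 1) * genChoose (s + n + 1) (j + 1) = (s + n + 1) * genChoose (s + n) j := by
      have := genChoose_shift' (s + n) j
      rw [show (s + (n : ℂ)) + 1 = s + n + 1 from rfl] at this
      exact this
    rw [hp] at hq ⊢
    have key : genChoose (s + n) j / ((j : ℂ) + 1)
        = (genChoose (s + n) (j + 1) + genChoose (s + n) j) / (s + n + 1) := by
      rw [div_eq_div_iff (kc_ne j) hsn]; linear_combination -hq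
    have e4 : (-1 : ℂ) ^ j / ((j : ℂ) + 1) * genChoose (s + n) j
        = (-1 : ℂ) ^ j * (genChoose (s + n) j / ((j : ℂ) + 1)) := by ring
    rw [mul_add, e4, key]
    ring
  rw [hFf1, Finset.sum_congr rfl split, Finset.sum_add_distrib, Finset.sum_range_succ]
  have hFf2 : Ff n s = ∑ j ∈ Finset.range n, (-1 : ℂ) ^ j / ((j : ℂ) + 1) * genChoose (s + n) (j + 1) := by
    rw [Ff, sum_Icc_one]
    refine Finset.sum_congr rfl fun j _ => ?_
    have e1 : (j + 1) - 1 = j := by omega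
    have e2 : ((j + 1 : ℕ) : ℂ) = (j : ℂ) + 1 := by push_cast; ring
    rw [e1, e2]
  rw [← hFf2, ← Finset.sum_div, hAval]


lemma fac_form (n k : ℕ) (hk : k < n) (X : ℂ) :
    X / (((k : ℂ) + 1) ^ 2 * (Nat.choose n (k + 1) : ℂ))
      = X * (Nat.factorial k : ℂ) * (Nat.factorial (n - 1 - k) : ℂ)
          / (((k : ℂ) + 1) * (Nat.factorial n : ℂ)) := by
  have hk1 : k + 1 ≤ n := hk
  have hnf : ((Nat.factorial n : ℕ) : ℂ)
      = (((k : ℂ) + 1) * (Nat.factorial k : ℂ)) * ((Nat.choose n (k + 1) : ℕ) : ℂ)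
          * ((Nat.factorial (n - 1 - k) : ℕ) : ℂ) := by
    have h := Nat.choose_mul_factorial_mul_factorial hk1
    have h2 : n - (k + 1) = n - 1 - k := by omega
    rw [h2] at h
    have h3 := congrArg (fun t : ℕ => (t : ℂ)) h
    rw [Nat.factorial_succ] at h3
    push_cast at h3
    linear_combination -h3
  rw [div_eq_div_iff (mul_ne_zero (pow_ne_zero 2 (kc_ne k)) (choose_ne hk1))
    (mul_ne_zero (kc_ne k) (fac_ne n))]
  linear_combination (X * ((k : ℂ) + 1)) * hnf

lemma hB (m : ℕ) (s : ℂ) (hsn : s + (m : ℂ) + 2 ≠ 0) :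
    Gg (m + 2) s = Gg (m + 1) s
      + (-1) ^ (m + 1) * (s * genChoose (s + ((m + 1 : ℕ) : ℂ)) (m + 1)) / (((m : ℂ) + 2) ^ 2)
      - s / (((m : ℂ) + 2) * (s + m + 2)) * (1 + (-1) ^ m * genChoose (s + m + 1) (m + 1)) := by
  have hm2 : ((m : ℂ) + 2) ≠ 0 := by
    have h0 : ((m : ℂ) + 2) = ((m + 2 : ℕ) : ℂ) := by push_cast; ring
    rw [h0]; exact Nat.cast_ne_zero.mpr (by omega)
  have step : ∀ k ∈ Finset.range (m + 1),
      (-1 : ℂ) ^ k * (s * genChoose (s + k) k) / (((k : ℂ) + 1) ^ 2 * (Nat.choose (m + 2) (k + 1) : ℂ))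
        = (-1 : ℂ) ^ k * (s * genChoose (s + k) k) / (((k : ℂ) + 1) ^ 2 * (Nat.choose (m + 1) (k + 1) : ℂ))
          - s / (((m : ℂ) + 2) * (Nat.factorial (m + 1) : ℂ))
              * ((-1 : ℂ) ^ k * genChoose (s + k) k * (Nat.factorial k : ℂ) * (Nat.factorial (m - k) : ℂ)) := by
    intro k hk
    have hkm : k ≤ m := by simpa [Nat.lt_succ_iff] using hk
    rw [fac_form (m + 2) k (by omega), fac_form (m + 1) k (by omega)]
    have e1 : m + 2 - 1 - k = (m - k) + 1 := by omega
    have e2 : m + 1 - 1 - k = m - k := by omega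
    rw [e1, e2]
    have e3 : ((Nat.factorial ((m - k) + 1) : ℕ) : ℂ)
        = ((m : ℂ) - k + 1) * (Nat.factorial (m - k) : ℂ) := by
      rw [Nat.factorial_succ]; push_cast [Nat.cast_sub hkm]; ring
    have e4 : ((Nat.factorial (m + 2) : ℕ) : ℂ) = ((m : ℂ) + 2) * (Nat.factorial (m + 1) : ℂ) := by
      rw [show m + 2 = (m + 1) + 1 from rfl, Nat.factorial_succ]; push_cast; ring
    rw [e3, e4]
    field_simp [kc_ne k, fac_ne (m + 1), fac_ne k, fac_ne (m - k), hm2]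
    ring
  rw [Gg, Finset.sum_range_succ, Finset.sum_congr rfl step, Finset.sum_sub_distrib]
  rw [← Finset.mul_sum]
  -- evaluate the W-sum
  have hW := Wlem m s m le_rfl
  have hsum : ∑ j ∈ Finset.range (m + 1),
      (-1 : ℂ) ^ j * genChoose (s + j) j * (Nat.factorial j : ℂ) * (Nat.factorial (m - j) : ℂ)
      = (Nat.factorial (m + 1) : ℂ) * (1 + (-1) ^ m * genChoose (s + m + 1) (m + 1)) / (s + m + 2) := by
    rw [eq_div_iff hsn]
    have e5 : m - m = 0 := by omega
    rw [e5, Nat.factorial_zero] at hW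
    push_cast at hW
    linear_combination hW
  rw [hsum]
  -- top term
  have htop : ((((m + 1 : ℕ) : ℂ)) + 1) ^ 2 * (Nat.choose (m + 2) (m + 1 + 1) : ℂ)
      = ((m : ℂ) + 2) ^ 2 := by
    rw [Nat.choose_self]; push_cast; ring
  rw [htop]
  rw [Gg]
  have hfac := fac_ne (m + 1)
  field_simp
  ring

lemma genChoose_one (x : ℂ) : genChoose x 1 = x := by
  rw [show (1 : ℕ) = 0 + 1 from rfl, genChoose_succ]
  simp [genChoose_zero]

lemma Mlem : ∀ n : ℕ, ∀ s : ℂ, (∀ j ∈ Finset.Icc 1 n, s + (j : ℂ) ≠ 0) →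
    Ff n s = Hc n + Gg n s := by
  intro n
  induction n with
  | zero => intro s _; simp [Ff, Gg, Hc]
  | succ n ih =>
      intro s hs
      match n, ih with
      | 0, _ =>
          simp [Ff, Gg, Hc, genChoose_one, genChoose_zero]
          push_cast
          ring
      | m + 1, ih =>
          have hsn : s + (m : ℂ) + 2 ≠ 0 := by
            have := hs (m + 2) (by simp)
            push_cast at this
            intro h; apply this; linear_combination h
          have ih' := ih s (fun j hj => hs j (Finset.mem_Icc.mpr
            ⟨(Finset.mem_Icc.mp hj).1, le_trans (Finset.mem_Icc.mp hj).2 (Nat.le_succ _)⟩))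
          have hsn' : s + ((m + 1 : ℕ) : ℂ) + 1 ≠ 0 := by
            push_cast; intro h; apply hsn; linear_combination h
          rw [show m + 1 + 1 = (m + 1) + 1 from rfl, hA (m + 1) s hsn', ih',
            show (m + 1) + 1 = m + 2 from rfl, hB m s hsn]
          have hHc : Hc (m + 2) = Hc (m + 1) + 1 / (((m + 1 : ℕ) : ℂ) + 1) := by
            rw [Hc, Finset.sum_range_succ, Hc]
          rw [hHc]
          -- P = Q * s / (m+2)
          have hP := genChoose_succ (s + ((m + 1 : ℕ) : ℂ)) (m + 1)
          push_cast at hP ⊢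
          rw [show s + ((m : ℂ) + 1) - ((m : ℂ) + 1) = s by ring] at hP
          rw [show s + ((m : ℂ) + 1) = s + (m : ℂ) + 1 by ring] at hP ⊢
          rw [hP]
          have hm2 : ((m : ℂ) + 2) ≠ 0 := by
            have h0 : ((m : ℂ) + 2) = ((m + 2 : ℕ) : ℂ) := by push_cast; ring
            rw [h0]; exact Nat.cast_ne_zero.mpr (by omega)
          rw [show ((m : ℂ) + 1 + 1) = (m : ℂ) + 2 by ring,
            show (s + (m : ℂ) + 1 + 1) = s + (m : ℂ) + 2 by ring]
          field_simp [hm2, hsn]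
          ring

lemma hasDeriv_gen (n k : ℕ) (s : ℂ) (hnz : ∀ j ∈ Finset.range k, s + (n : ℂ) - j ≠ 0) :
    HasDerivAt (fun t => genChoose (t + n) k)
      (genChoose (s + n) k * ∑ j ∈ Finset.range k, 1 / (s + n - j)) s := by
  induction k with
  | zero =>
      have hf : (fun t : ℂ => genChoose (t + n) 0) = fun _ => (1 : ℂ) :=
        funext fun t => genChoose_zero _
      rw [hf]
      simpa using hasDerivAt_const s (1 : ℂ)
  | succ k ih =>
      have ih' := ih (fun j hj => hnz j (Finset.mem_range.mpr (Nat.lt_succ_of_lt (Finset.mem_range.mp hj))))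
      have hg : HasDerivAt (fun t : ℂ => t + n - k) 1 s := by
        have h := (hasDerivAt_id s).add_const ((n : ℂ) - k)
        simp only [id_eq] at h
        have : (fun t : ℂ => t + ((n : ℂ) - k)) = fun t : ℂ => t + n - k := funext fun t => by ring
        rwa [this] at h
      have hd := (ih'.mul hg).div_const ((k : ℂ) + 1)
      have hf : (fun t : ℂ => genChoose (t + n) (k + 1))
          = fun t : ℂ => genChoose (t + n) k * (t + n - k) / ((k : ℂ) + 1) :=
        funext fun t => genChoose_succ _ k
      rw [hf]
      refine hd.congr_deriv ?_
      rw [genChoose_succ, Finset.sum_range_succ]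
      have hk := hnz k (Finset.mem_range.mpr (Nat.lt_succ_self k))
      field_simp [kc_ne k]

lemma prod_rep (k : ℕ) (t : ℂ) :
    genChoose (t + k) k = (∏ j ∈ Finset.range k, (t + j + 1)) / (Nat.factorial k) := by
  rw [genChoose]
  congr 1
  rw [← Finset.prod_range_reflect]
  refine Finset.prod_congr rfl fun j hj => ?_
  have hj' : j < k := Finset.mem_range.mp hj
  have h1 : ((k - 1 - j : ℕ) : ℂ) = (k : ℂ) - 1 - j := by
    push_cast [Nat.cast_sub (by omega : j ≤ k - 1), Nat.cast_sub (by omega : 1 ≤ k)]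
    ring
  rw [h1]
  ring

lemma hasDeriv_core (k : ℕ) (s : ℂ) (h : ∀ j ∈ Finset.range k, s + (j : ℂ) + 1 ≠ 0) :
    HasDerivAt (fun t : ℂ => t * ∏ j ∈ Finset.range k, (t + j + 1))
      ((∏ j ∈ Finset.range k, (s + j + 1)) * (1 + s * ∑ j ∈ Finset.range k, 1 / (s + j + 1))) s := by
  induction k with
  | zero =>
      simp only [Finset.prod_range_zero, Finset.sum_range_zero, mul_one, mul_zero, add_zero]
      exact hasDerivAt_id' s
  | succ k ih =>
      have ih' := ih (fun j hj => h j (Finset.mem_range.mpr (Nat.lt_succ_of_lt (Finset.mem_range.mp hj))))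
      have hg : HasDerivAt (fun t : ℂ => t + k + 1) 1 s := by
        have hh := (hasDerivAt_id s).add_const ((k : ℂ) + 1)
        simp only [id_eq] at hh
        have : (fun t : ℂ => t + ((k : ℂ) + 1)) = fun t : ℂ => t + k + 1 := funext fun t => by ring
        rwa [this] at hh
      have hd := ih'.mul hg
      have hf : (fun t : ℂ => t * ∏ j ∈ Finset.range (k + 1), (t + j + 1))
          = fun t : ℂ => (t * ∏ j ∈ Finset.range k, (t + j + 1)) * (t + k + 1) :=
        funext fun t => by rw [Finset.prod_range_succ]; ring
      rw [hf]
      refine hd.congr_deriv ?_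
      rw [Finset.prod_range_succ, Finset.sum_range_succ]
      have hk := h k (Finset.mem_range.mpr (Nat.lt_succ_self k))
      field_simp
      ring

lemma hasDeriv_term (k : ℕ) (s : ℂ) (h : ∀ j ∈ Finset.Icc 1 k, s + (j : ℂ) ≠ 0) :
    HasDerivAt (fun t : ℂ => t * genChoose (t + k) k)
      (genChoose (s + k) k * (1 + s * ∑ j ∈ Finset.Icc 1 k, 1 / (s + j))) s := by
  have h' : ∀ j ∈ Finset.range k, s + (j : ℂ) + 1 ≠ 0 := by
    intro j hj
    have := h (j + 1) (Finset.mem_Icc.mpr ⟨by omega, by have := Finset.mem_range.mp hj; omega⟩)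
    push_cast at this
    intro hc; apply this; linear_combination hc
  have hd := (hasDeriv_core k s h').div_const ((Nat.factorial k : ℕ) : ℂ)
  have hf : (fun t : ℂ => t * genChoose (t + k) k)
      = fun t : ℂ => (t * ∏ j ∈ Finset.range k, (t + j + 1)) / ((Nat.factorial k : ℕ) : ℂ) :=
    funext fun t => by rw [prod_rep]; ring
  rw [hf]
  refine hd.congr_deriv ?_
  rw [prod_rep]
  have hIcc : ∑ j ∈ Finset.Icc 1 k, 1 / (s + (j : ℂ)) = ∑ j ∈ Finset.range k, 1 / (s + j + 1) := by
    rw [sum_Icc_one]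
    exact Finset.sum_congr rfl fun j _ => by push_cast; ring_nf
  rw [hIcc]
  ring

theorem stmt_6 (n : ℕ) (hn : 0 < n) (s : ℂ)
    (hs : ∀ j ∈ Finset.Icc 1 n, s + (j : ℂ) ≠ 0) :
    ∑ k ∈ Finset.Icc 1 n, (-1 : ℂ) ^ (k - 1) / k * genChoose (s + n) k *
        (∑ j ∈ Finset.range k, 1 / (s + n - j)) =
      (∑ k ∈ Finset.range n, (-1 : ℂ) ^ k * genChoose (s + k) k /
          (((k : ℂ) + 1) ^ 2 * (Nat.choose n (k + 1) : ℂ))) +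
        s * ∑ k ∈ Finset.range n, (-1 : ℂ) ^ k * genChoose (s + k) k /
          (((k : ℂ) + 1) ^ 2 * (Nat.choose n (k + 1) : ℂ)) *
          ∑ j ∈ Finset.Icc 1 k, 1 / (s + j) := by
  have hnzF : ∀ k ∈ Finset.Icc 1 n, ∀ j ∈ Finset.range k, s + (n : ℂ) - j ≠ 0 := by
    intro k hk j hj
    have hkn := (Finset.mem_Icc.mp hk).2
    have hjk := Finset.mem_range.mp hj
    have h1 : ((n - j : ℕ) : ℂ) = (n : ℂ) - j := Nat.cast_sub (by omega)
    have h2 := hs (n - j) (Finset.mem_Icc.mpr ⟨by omega, by omega⟩)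
    rw [h1] at h2
    intro hc; apply h2; linear_combination hc
  have hF0 : HasDerivAt (Ff n)
      (∑ k ∈ Finset.Icc 1 n, (-1 : ℂ) ^ (k - 1) / (k : ℂ) *
        (genChoose (s + n) k * ∑ j ∈ Finset.range k, 1 / (s + n - j))) s :=
    HasDerivAt.fun_sum fun k hk => (hasDeriv_gen n k s (hnzF k hk)).const_mul _
  have hF : HasDerivAt (Ff n)
      (∑ k ∈ Finset.Icc 1 n, (-1 : ℂ) ^ (k - 1) / k * genChoose (s + n) k *
        (∑ j ∈ Finset.range k, 1 / (s + n - j))) s := by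
    convert hF0 using 1
    exact Finset.sum_congr rfl fun k _ => by ring
  have hG1 : HasDerivAt (fun t => Gg n t)
      (∑ k ∈ Finset.range n, ((-1 : ℂ) ^ k *
          (genChoose (s + k) k * (1 + s * ∑ j ∈ Finset.Icc 1 k, 1 / (s + j)))) /
        (((k : ℂ) + 1) ^ 2 * (Nat.choose n (k + 1) : ℂ))) s :=
    HasDerivAt.fun_sum fun k hk =>
      ((hasDeriv_term k s (fun j hj => hs j (Finset.mem_Icc.mpr
          ⟨(Finset.mem_Icc.mp hj).1,
            le_trans (Finset.mem_Icc.mp hj).2 (le_of_lt (Finset.mem_range.mp hk))⟩))).const_mul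
        ((-1 : ℂ) ^ k)).div_const _
  have hRHS : (∑ k ∈ Finset.range n, (-1 : ℂ) ^ k * genChoose (s + k) k /
          (((k : ℂ) + 1) ^ 2 * (Nat.choose n (k + 1) : ℂ))) +
        s * ∑ k ∈ Finset.range n, (-1 : ℂ) ^ k * genChoose (s + k) k /
          (((k : ℂ) + 1) ^ 2 * (Nat.choose n (k + 1) : ℂ)) *
          ∑ j ∈ Finset.Icc 1 k, 1 / (s + j)
      = ∑ k ∈ Finset.range n, ((-1 : ℂ) ^ k *
          (genChoose (s + k) k * (1 + s * ∑ j ∈ Finset.Icc 1 k, 1 / (s + j)))) /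
        (((k : ℂ) + 1) ^ 2 * (Nat.choose n (k + 1) : ℂ)) := by
    rw [Finset.mul_sum, ← Finset.sum_add_distrib]
    exact Finset.sum_congr rfl fun k _ => by ring
  have hG : HasDerivAt (fun t => Hc n + Gg n t)
      ((∑ k ∈ Finset.range n, (-1 : ℂ) ^ k * genChoose (s + k) k /
          (((k : ℂ) + 1) ^ 2 * (Nat.choose n (k + 1) : ℂ))) +
        s * ∑ k ∈ Finset.range n, (-1 : ℂ) ^ k * genChoose (s + k) k /
          (((k : ℂ) + 1) ^ 2 * (Nat.choose n (k + 1) : ℂ)) *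
          ∑ j ∈ Finset.Icc 1 k, 1 / (s + j)) s := by
    rw [hRHS]
    exact hG1.const_add (Hc n)
  have hopen : IsOpen {t : ℂ | ∀ j ∈ Finset.Icc 1 n, t + (j : ℂ) ≠ 0} := by
    have he : {t : ℂ | ∀ j ∈ Finset.Icc 1 n, t + (j : ℂ) ≠ 0}
        = ⋂ j ∈ Finset.Icc 1 n, {t : ℂ | t + (j : ℂ) ≠ 0} := by
      ext t; simp
    rw [he]
    exact isOpen_biInter_finset fun j _ =>
      isOpen_ne_fun (continuous_id.add continuous_const) continuous_const
  have hev : Ff n =ᶠ[nhds s] fun t => Hc n + Gg n t :=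
    Filter.eventuallyEq_of_mem (hopen.mem_nhds hs) fun t ht => Mlem n t ht
  calc ∑ k ∈ Finset.Icc 1 n, (-1 : ℂ) ^ (k - 1) / k * genChoose (s + n) k *
        (∑ j ∈ Finset.range k, 1 / (s + n - j))
      = deriv (Ff n) s := hF.deriv.symm
    _ = deriv (fun t => Hc n + Gg n t) s := hev.deriv_eq
    _ = _ := hG.deriv
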